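/- Let M be a 1×q pattern vector and N an r×q pattern matrix, let T = col(M, N), and let S(T) be the derived set of the graph G(T) under the color change rule. Then M is independent of N if and only if node 1 (the node corresponding to the row M) belongs to S(T). -/

import Mathlib

inductive PSym | zero | star | any
deriving DecidableEq

namespace PSym

def symAdd : PSym → PSym → PSym
  | zero, x => x
  | x, zero => x
  | _, _ => any

def symMul : PSym → PSym → PSym
  | zero, _ => zero
  | _, zero => zero
  | star, star => star
  | _, _ => any

instance : Zero PSym := ⟨zero⟩
instance : Add PSym := ⟨symAdd⟩

instance : AddCommMonoid PSym where
  add_assoc a b c := by cases a <;> cases b <;> cases c <;> rfl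
  zero_add a := by cases a <;> rfl
  add_zero a := by cases a <;> rfl
  add_comm a b := by cases a <;> cases b <;> rfl
  nsmul := nsmulRec

end PSym

/-- The pattern class of a pattern matrix. -/
def PatClass {p q : Type*} (M : Matrix p q PSym) : Set (Matrix p q ℝ) :=
  {A | ∀ i j, (M i j = PSym.zero → A i j = 0) ∧ (M i j = PSym.star → A i j ≠ 0)}

/-- Product of pattern matrices. -/
def patMul {p q s : ℕ} (M : Matrix (Fin p) (Fin q) PSym) (N : Matrix (Fin q) (Fin s) PSym) :
    Matrix (Fin p) (Fin s) PSym :=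
  fun i j => ∑ k, PSym.symMul (M i k) (N k j)

/-- A 1×q pattern vector `M` is independent of an r×q pattern matrix `N`. -/
def Independent {q r : ℕ} (M : Matrix (Fin 1) (Fin q) PSym) (N : Matrix (Fin r) (Fin q) PSym) : Prop :=
  ∀ M₀ ∈ PatClass M, ∀ N₀ ∈ PatClass N, ∀ (z₁ : ℝ) (z₂ : Fin r → ℝ),
    (∀ j, z₁ * M₀ 0 j + ∑ i, z₂ i * N₀ i j = 0) → z₁ = 0

/-- The derived set of the color change rule on the graph `G(T)` of a pattern
matrix `T`: a (row) node `j` is black if some (column) node `i` has `j` as its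
unique white out-neighbor via a `*`-edge, all other out-neighbors of `i`
(nodes `j'` with `T j' i ≠ 0`) being already black. -/
inductive DerivedBlack {r q : ℕ} (T : Matrix (Fin r) (Fin q) PSym) : Fin r → Prop
  | step (i : Fin q) (j : Fin r) (hstar : T j i = PSym.star)
      (hrest : ∀ j' : Fin r, T j' i ≠ PSym.zero → j' ≠ j → DerivedBlack T j') :
      DerivedBlack T j


open Classical in
lemma black_zero {n q : ℕ} (T : Matrix (Fin n) (Fin q) PSym)
    (T₀ : Matrix (Fin n) (Fin q) ℝ) (hT₀ : T₀ ∈ PatClass T) (z : Fin n → ℝ)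
    (hz : ∀ i, ∑ k, z k * T₀ k i = 0) : ∀ j, DerivedBlack T j → z j = 0 := by
  intro j hj
  induction hj with
  | step i j hstar hrest ih =>
    have key : ∑ k, z k * T₀ k i = z j * T₀ j i := by
      apply Finset.sum_eq_single
      · intro k _ hk
        by_cases hz0 : T k i = PSym.zero
        · rw [(hT₀ k i).1 hz0, mul_zero]
        · rw [ih k hz0 hk, zero_mul]
      · intro h; exact absurd (Finset.mem_univ j) h
    have hzj : z j * T₀ j i = 0 := key.symm.trans (hz i)
    exact (mul_eq_zero.mp hzj).resolve_right ((hT₀ j i).2 hstar)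

open Classical in
lemma col_exists {n q : ℕ} (T : Matrix (Fin n) (Fin q) PSym) (W : Finset (Fin n))
    (hstep : ∀ j ∈ W, ∀ i, T j i = PSym.star → ∃ j' ∈ W, j' ≠ j ∧ T j' i ≠ PSym.zero)
    (i : Fin q) :
    ∃ v : Fin n → ℝ,
      (∀ j, (T j i = PSym.zero → v j = 0) ∧ (T j i = PSym.star → v j ≠ 0)) ∧
      ∑ j ∈ W, v j = 0 := by
  classical
  set S : Finset (Fin n) := W.filter (fun j => T j i = PSym.star) with hS
  by_cases hSe : S = ∅
  · refine ⟨fun j => if T j i = PSym.star then 1 else 0, ?_, ?_⟩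
    · intro j
      constructor
      · intro h; simp [h]
      · intro h; simp [h]
    · apply Finset.sum_eq_zero
      intro j hj
      have : T j i ≠ PSym.star := by
        intro h
        have : j ∈ S := Finset.mem_filter.mpr ⟨hj, h⟩
        simp [hSe] at this
      simp [this]
  · obtain ⟨j₀, hj₀⟩ := Finset.nonempty_iff_ne_empty.mpr hSe
    have hj₀W : j₀ ∈ W := (Finset.mem_filter.mp hj₀).1
    have hj₀s : T j₀ i = PSym.star := (Finset.mem_filter.mp hj₀).2
    set A : Finset (Fin n) := W.filter (fun j => T j i = PSym.any) with hA
    by_cases hAe : A = ∅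
    · obtain ⟨j', hj'W, hj'ne, hj'nz⟩ := hstep j₀ hj₀W i hj₀s
      have hj's : T j' i = PSym.star := by
        cases h : T j' i with
        | zero => exact absurd h hj'nz
        | star => rfl
        | any =>
          have : j' ∈ A := Finset.mem_filter.mpr ⟨hj'W, h⟩
          simp [hAe] at this
      have hj'S : j' ∈ S := Finset.mem_filter.mpr ⟨hj'W, hj's⟩
      have hcard : 2 ≤ S.card := Finset.one_lt_card.mpr ⟨j₀, hj₀, j', hj'S, fun h => hj'ne h.symm⟩
      refine ⟨fun j => if j = j₀ then -((S.card : ℝ) - 1)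
        else if T j i = PSym.star then 1 else 0, ?_, ?_⟩
      · intro j
        constructor
        · intro h
          have : j ≠ j₀ := by rintro rfl; rw [hj₀s] at h; exact PSym.noConfusion h
          simp [this, h]
        · intro h
          by_cases hj : j = j₀
          · simp [hj]
            intro hc
            have : (S.card : ℝ) ≥ 2 := by exact_mod_cast hcard
            linarith
          · simp [hj, h]
      · rw [← Finset.add_sum_erase _ _ hj₀W]
        rw [if_pos rfl]
        have : ∑ j ∈ W.erase j₀, (if j = j₀ then -((S.card : ℝ) - 1)
            else if T j i = PSym.star then 1 else 0)
            = ∑ j ∈ W.erase j₀, (if T j i = PSym.star then (1:ℝ) else 0) := by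
          apply Finset.sum_congr rfl
          intro j hj
          have : j ≠ j₀ := (Finset.mem_erase.mp hj).1
          simp [this]
        rw [this, Finset.sum_boole]
        have hfe : (W.erase j₀).filter (fun j => T j i = PSym.star) = S.erase j₀ := by
          rw [hS, Finset.filter_erase]
        rw [hfe]
        rw [Finset.card_erase_of_mem hj₀]
        have : (1:ℕ) ≤ S.card := le_trans one_le_two hcard
        push_cast [this]
        ring
    · obtain ⟨a, ha⟩ := Finset.nonempty_iff_ne_empty.mpr hAe
      have haW : a ∈ W := (Finset.mem_filter.mp ha).1
      have haA : T a i = PSym.any := (Finset.mem_filter.mp ha).2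
      refine ⟨fun j => if j = a then -(S.card : ℝ)
        else if T j i = PSym.star then 1 else 0, ?_, ?_⟩
      · intro j
        constructor
        · intro h
          have : j ≠ a := by rintro rfl; rw [haA] at h; exact PSym.noConfusion h
          simp [this, h]
        · intro h
          have : j ≠ a := by rintro rfl; rw [haA] at h; exact PSym.noConfusion h
          simp [this, h]
      · rw [← Finset.add_sum_erase _ _ haW]
        rw [if_pos rfl]
        have : ∑ j ∈ W.erase a, (if j = a then -((S.card:ℝ))
            else if T j i = PSym.star then 1 else 0)
            = ∑ j ∈ W.erase a, (if T j i = PSym.star then (1:ℝ) else 0) := by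
          apply Finset.sum_congr rfl
          intro j hj
          have : j ≠ a := (Finset.mem_erase.mp hj).1
          simp [this]
        rw [this, Finset.sum_boole]
        have hfe : (W.erase a).filter (fun j => T j i = PSym.star) = S := by
          rw [hS, Finset.filter_erase]
          apply Finset.erase_eq_of_notMem
          intro h
          have := (Finset.mem_filter.mp h).2
          rw [haA] at this; exact PSym.noConfusion this
        rw [hfe]
        simp

/-- `M` is independent of `N` if and only if the node of the row
of `M` (node `0` of `G(T)` for `T = col(M, N)`) belongs to the derived set. -/
theorem independent_iff_derived {q r : ℕ}
    (M : Matrix (Fin 1) (Fin q) PSym) (N : Matrix (Fin r) (Fin q) PSym) :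
    Independent M N ↔
      DerivedBlack (Matrix.of (Fin.cons (M 0) N) : Matrix (Fin (r + 1)) (Fin q) PSym)
        (0 : Fin (r + 1)) := by
  classical
  set T : Matrix (Fin (r+1)) (Fin q) PSym := Matrix.of (Fin.cons (M 0) N) with hT
  constructor
  · intro hind
    by_contra hblack
    set W : Finset (Fin (r+1)) := Finset.univ.filter (fun j => ¬ DerivedBlack T j) with hW
    have h0W : (0 : Fin (r+1)) ∈ W := by simp [hW, hblack]
    have hstep : ∀ j ∈ W, ∀ i, T j i = PSym.star →
        ∃ j' ∈ W, j' ≠ j ∧ T j' i ≠ PSym.zero := by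
      intro j hj i hs
      have hnb : ¬ DerivedBlack T j := by simpa [hW] using hj
      by_contra hc
      push_neg at hc
      refine hnb (DerivedBlack.step i j hs (fun j' hnz hne => ?_))
      by_contra hnb'
      have hj'W : j' ∈ W := by simp [hW, hnb']
      exact hnz (hc j' hj'W hne)
    choose v hv hsum using fun i => col_exists T W hstep i
    have hM₀ : (fun (_ : Fin 1) i => v i 0) ∈ PatClass M := by
      intro j i
      have hj : j = 0 := Subsingleton.elim j 0
      subst hj
      have h := hv i 0
      exact h
    have hN₀ : (fun (k : Fin r) i => v i k.succ) ∈ PatClass N := by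
      intro k i
      have h := hv i k.succ
      exact h
    have heq : ∀ i, (1:ℝ) * v i 0 +
        ∑ k : Fin r, (if k.succ ∈ W then (1:ℝ) else 0) * v i k.succ = 0 := by
      intro i
      have h1 : ∑ j : Fin (r+1), (if j ∈ W then (1:ℝ) else 0) * v i j
          = ∑ j ∈ W, v i j := by
        calc ∑ j : Fin (r+1), (if j ∈ W then (1:ℝ) else 0) * v i j
            = ∑ j : Fin (r+1), (if j ∈ W then v i j else 0) := by
              apply Finset.sum_congr rfl
              intro j _
              by_cases h : j ∈ W <;> simp [h]
          _ = ∑ j ∈ W, v i j := by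
              rw [Finset.sum_ite_mem, Finset.univ_inter]
      rw [Fin.sum_univ_succ, if_pos h0W, one_mul] at h1
      rw [one_mul, h1]
      exact hsum i
    have := hind _ hM₀ _ hN₀ 1 (fun k => if k.succ ∈ W then (1:ℝ) else 0) heq
    norm_num at this
  · intro hblack M₀ hM₀ N₀ hN₀ z₁ z₂ heq
    set T₀ : Matrix (Fin (r+1)) (Fin q) ℝ := Matrix.of (Fin.cons (M₀ 0) N₀) with hT₀def
    have hT₀ : T₀ ∈ PatClass T := by
      intro j i
      induction j using Fin.cases with
      | zero => exact hM₀ 0 i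
      | succ k => exact hN₀ k i
    have hz : ∀ i, ∑ k, (Fin.cons z₁ z₂ : Fin (r+1) → ℝ) k * T₀ k i = 0 := by
      intro i
      rw [Fin.sum_univ_succ]
      exact heq i
    have := black_zero T T₀ hT₀ _ hz 0 hblack
    simpa using this
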